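/- arXiv:1907.12754 — 3 statements merged into one kernel-verified Lean document; each statement's English description precedes it below -/
import Mathlib

section
/- Let K be a field, let g ∈ K[z] be a polynomial of degree t ≥ 1, and let α_1, …, α_n be distinct elements of K with g(α_i) ≠ 0 for all i. Then every nonzero codeword c of the Goppa code Γ(L, g) (with c_i ∈ K) has Hamming weight at least t + 1; in particular the minimum distance of Γ(L, g) is at least t + 1. -/
open Polynomial

/-- Every nonzero codeword of the Goppa code `Γ(L, g)` with `deg g = t ≥ 1` has Hamming
weight at least `t + 1`. -/
theorem stmt12 {K : Type*} [Field K] [DecidableEq K] {n t : ℕ} (g : K[X]) (hdeg : g.natDegree = t)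
    (ht : 1 ≤ t) (α : Fin n → K) (hinj : Function.Injective α)
    (hα : ∀ i, g.eval (α i) ≠ 0) (c : Fin n → K) (hc : c ≠ 0)
    (hmem : ∑ i, Ideal.Quotient.mk (Ideal.span {g}) (C (c i)) *
        Ring.inverse (Ideal.Quotient.mk (Ideal.span {g}) (X - C (α i))) = 0) :
    t + 1 ≤ hammingNorm c := by
  classical
  set Q := Ideal.Quotient.mk (Ideal.span {g}) with hQ
  have hg0 : g ≠ 0 := by
    intro h; rw [h, natDegree_zero] at hdeg; omega
  have hQg : Q g = 0 := by
    rw [hQ, Ideal.Quotient.eq_zero_iff_mem]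
    exact Ideal.mem_span_singleton_self g
  -- each `X - C (α i)` is a unit mod g
  have hunit : ∀ i, IsUnit (Q (X - C (α i))) := by
    intro i
    have hco : IsCoprime (X - C (α i)) g :=
      (irreducible_X_sub_C (α i)).coprime_iff_not_dvd.mpr
        (fun hdvd => hα i (dvd_iff_isRoot.mp hdvd))
    obtain ⟨u, v, huv⟩ := hco
    refine IsUnit.of_mul_eq_one (Q u) ?_
    have := congrArg Q huv
    simp only [map_add, map_mul, map_one, hQg, mul_zero, add_zero] at this
    rw [mul_comm]; exact this
  set S : Finset (Fin n) := Finset.univ.filter (fun i => c i ≠ 0) with hS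
  set h : K[X] := ∑ i ∈ S, C (c i) * ∏ j ∈ S.erase i, (X - C (α j)) with hh
  set P : K[X] := ∏ j ∈ S, (X - C (α j)) with hP
  -- g divides h
  have hQh : Q h = 0 := by
    have step : ∀ i ∈ S, Q (C (c i) * ∏ j ∈ S.erase i, (X - C (α j)))
        = Q (C (c i)) * Ring.inverse (Q (X - C (α i))) * Q P := by
      intro i hi
      have hmul : (X - C (α i)) * ∏ j ∈ S.erase i, (X - C (α j)) = P := by
        rw [hP]; exact Finset.mul_prod_erase S (fun j => X - C (α j)) hi
      have : Q (X - C (α i)) * Q (∏ j ∈ S.erase i, (X - C (α j))) = Q P := by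
        rw [← map_mul, hmul]
      calc Q (C (c i) * ∏ j ∈ S.erase i, (X - C (α j)))
          = Q (C (c i)) * Q (∏ j ∈ S.erase i, (X - C (α j))) := map_mul _ _ _
        _ = Q (C (c i)) * (Ring.inverse (Q (X - C (α i))) *
              (Q (X - C (α i)) * Q (∏ j ∈ S.erase i, (X - C (α j))))) := by
            have key : Ring.inverse (Q (X - C (α i))) *
                (Q (X - C (α i)) * Q (∏ j ∈ S.erase i, (X - C (α j))))
                = Q (∏ j ∈ S.erase i, (X - C (α j))) := by
              rw [← mul_assoc, Ring.inverse_mul_cancel _ (hunit i), one_mul]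
            rw [key]
        _ = Q (C (c i)) * Ring.inverse (Q (X - C (α i))) * Q P := by
            rw [this, mul_assoc]
    have : Q h = (∑ i ∈ S, Q (C (c i)) * Ring.inverse (Q (X - C (α i)))) * Q P := by
      rw [hh, map_sum, Finset.sum_mul]
      exact Finset.sum_congr rfl step
    rw [this]
    have hsum : (∑ i ∈ S, Q (C (c i)) * Ring.inverse (Q (X - C (α i)))) = 0 := by
      rw [← hmem]
      refine Finset.sum_subset (Finset.subset_univ S) ?_
      intro i _ hiS
      have : c i = 0 := by
        by_contra hne
        exact hiS (Finset.mem_filter.mpr ⟨Finset.mem_univ i, hne⟩)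
      simp [this]
    rw [hsum, zero_mul]
  have hdvd : g ∣ h := by
    rwa [hQ, Ideal.Quotient.eq_zero_iff_mem, Ideal.mem_span_singleton] at hQh
  -- h ≠ 0
  obtain ⟨i₀, hi₀⟩ : ∃ i, c i ≠ 0 := Function.ne_iff.mp hc
  have hi₀S : i₀ ∈ S := Finset.mem_filter.mpr ⟨Finset.mem_univ i₀, hi₀⟩
  have hSne : S.Nonempty := ⟨i₀, hi₀S⟩
  have heval : h.eval (α i₀) = c i₀ * ∏ j ∈ S.erase i₀, (α i₀ - α j) := by
    rw [hh, eval_finset_sum]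
    rw [Finset.sum_eq_single i₀]
    · simp [eval_prod]
    · intro i hiS hne
      have hi₀e : i₀ ∈ S.erase i := Finset.mem_erase.mpr ⟨fun hEq => hne hEq.symm, hi₀S⟩
      simp only [eval_mul, eval_C, eval_prod, eval_sub, eval_X]
      rw [Finset.prod_eq_zero hi₀e (by ring), mul_zero]
    · intro habs; exact absurd hi₀S habs
  have hne : h ≠ 0 := by
    intro h0
    rw [h0, eval_zero] at heval
    have hprod : ∏ j ∈ S.erase i₀, (α i₀ - α j) ≠ 0 := by
      refine Finset.prod_ne_zero_iff.mpr ?_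
      intro j hj
      have hjne : j ≠ i₀ := (Finset.mem_erase.mp hj).1
      exact sub_ne_zero.mpr fun hEq => hjne (hinj hEq.symm)
    exact (mul_ne_zero hi₀ hprod) heval.symm
  -- degree bound
  have hdegh : h.natDegree ≤ S.card - 1 := by
    refine natDegree_sum_le_of_forall_le _ _ ?_
    intro i hi
    refine le_trans (natDegree_C_mul_le _ _) ?_
    have hmonic : ∀ j ∈ S.erase i, (X - C (α j)).Monic := fun j _ => monic_X_sub_C _
    rw [natDegree_prod_of_monic _ _ hmonic]
    simp only [natDegree_X_sub_C]
    rw [Finset.sum_const, smul_eq_mul, mul_one]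
    rw [Finset.card_erase_of_mem hi]
  have hle : t ≤ h.natDegree := hdeg ▸ natDegree_le_of_dvd hdvd hne
  have hcard : 1 ≤ S.card := Finset.card_pos.mpr hSne
  have : hammingNorm c = S.card := rfl
  omega
end

section
/- Let k ⊆ K be fields with K a finite extension of k of degree m, let g ∈ K[z] be a polynomial of degree t ≥ 1, and let α_1, …, α_n be distinct elements of K with g(α_i) ≠ 0 for all i. Then the Goppa code Γ(L, g) ∩ k^n, i.e. the set of vectors c = (c_1, …, c_n) with all c_i ∈ k satisfying Σ_{i=1}^n c_i·(z − α_i)^{−1} = 0 in K[z]/⟨g(z)⟩, is a k-linear subspace of k^n of dimension at least n − m·t over k. -/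
open Polynomial

/-- For a degree-`m` field extension `k ⊆ K` and Goppa data `(g, α)` with `deg g = t ≥ 1`,
the restriction `Γ(L, g) ∩ k^n` is a `k`-linear subspace of `k^n` of dimension at least
`n - m·t`. -/
theorem stmt13 {k K : Type*} [Field k] [Field K] [Algebra k K] [FiniteDimensional k K]
    {m n t : ℕ} (hm : Module.finrank k K = m)
    (g : K[X]) (hdeg : g.natDegree = t) (ht : 1 ≤ t)
    (α : Fin n → K) (hinj : Function.Injective α) (hα : ∀ i, g.eval (α i) ≠ 0) :
    ∃ W : Submodule k (Fin n → k),
      (↑W = {c : Fin n → k |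
        ∑ i, Ideal.Quotient.mk (Ideal.span {g}) (C (algebraMap k K (c i))) *
          Ring.inverse (Ideal.Quotient.mk (Ideal.span {g}) (X - C (α i))) = 0}) ∧
      n - m * t ≤ Module.finrank k W := by
  have hg : g ≠ 0 := by
    intro h
    rw [h, natDegree_zero] at hdeg
    omega
  haveI : FiniteDimensional K (AdjoinRoot g) := (AdjoinRoot.powerBasis hg).finite
  haveI : FiniteDimensional k (AdjoinRoot g) := FiniteDimensional.trans k K (AdjoinRoot g)
  let inv : Fin n → AdjoinRoot g := fun i =>
    Ring.inverse (Ideal.Quotient.mk (Ideal.span {g}) (X - C (α i)))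
  let φ : (Fin n → k) →ₗ[k] AdjoinRoot g :=
    { toFun := fun c => ∑ i, c i • inv i
      map_add' := by intros; simp [add_smul, Finset.sum_add_distrib]
      map_smul' := by intros; simp [smul_smul, Finset.smul_sum] }
  refine ⟨LinearMap.ker φ, ?_, ?_⟩
  · ext c
    simp only [SetLike.mem_coe, LinearMap.mem_ker, Set.mem_setOf_eq]
    have hsm : ∀ i, c i • inv i =
        Ideal.Quotient.mk (Ideal.span {g}) (C (algebraMap k K (c i))) *
          Ring.inverse (Ideal.Quotient.mk (Ideal.span {g}) (X - C (α i))) := by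
      intro i
      rw [Algebra.smul_def]
      rfl
    show (∑ i, c i • inv i) = 0 ↔ _
    rw [Finset.sum_congr rfl fun i _ => hsm i]
    exact Iff.rfl
  · have hrank := φ.finrank_range_add_finrank_ker
    have h1 : Module.finrank k (Fin n → k) = n := by simp
    have h2 : Module.finrank k (AdjoinRoot g) = m * t := by
      rw [← Module.finrank_mul_finrank k K (AdjoinRoot g), hm,
        (AdjoinRoot.powerBasis hg).finrank, AdjoinRoot.powerBasis_dim, hdeg]
    have h3 : Module.finrank k (LinearMap.range φ) ≤ m * t :=
      h2 ▸ Submodule.finrank_le _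
    omega
end

section
/- Let F be a field, let B be a finite nonempty index set, let (α_i)_{i∈B} be distinct elements of F, let (e_i)_{i∈B} be nonzero elements of F, and let g ∈ F[z] with deg g ≥ 1 and g(α_i) ≠ 0 for all i ∈ B. Define σ(z) = Π_{i∈B} (z − α_i), w(z) = Σ_{i∈B} e_i Π_{j∈B, j≠i} (z − α_j), and the syndrome S = Σ_{i∈B} e_i·(z − α_i)^{−1} computed in the quotient ring F[z]/⟨g(z)⟩. Then: (i) σ and w are coprime in F[z] (gcd(σ(z), w(z)) = 1); and (ii) σ(z)·S ≡ w(z) (mod g(z)), i.e. the class of σ times S equals the class of w in F[z]/⟨g(z)⟩. -/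
open Polynomial

lemma coprime_X_sub_C_of_eval_ne {F : Type*} [Field F] {a : F} {p : F[X]}
    (h : p.eval a ≠ 0) : IsCoprime (X - C a) p := by
  rw [(irreducible_X_sub_C a).coprime_iff_not_dvd, dvd_iff_isRoot]
  exact h

/-- The error locator `σ` and error evaluator `w` are coprime, and the key equation
`σ(z)·S ≡ w(z) (mod g(z))` holds, where `S = ∑_{i∈B} eᵢ (z - αᵢ)⁻¹` is the syndrome
computed in `F[z]/⟨g⟩`. -/
theorem stmt15 {F : Type*} [Field F] {ι : Type*} [DecidableEq ι] (B : Finset ι) (hB : B.Nonempty)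
    (α : ι → F) (hα : Set.InjOn α ↑B) (e : ι → F) (he : ∀ i ∈ B, e i ≠ 0)
    (g : F[X]) (hg : 1 ≤ g.natDegree) (hgα : ∀ i ∈ B, g.eval (α i) ≠ 0) :
    IsCoprime (∏ i ∈ B, (X - C (α i)))
        (∑ i ∈ B, C (e i) * ∏ j ∈ B.erase i, (X - C (α j))) ∧
      Ideal.Quotient.mk (Ideal.span {g}) (∏ i ∈ B, (X - C (α i))) *
          (∑ i ∈ B, Ideal.Quotient.mk (Ideal.span {g}) (C (e i)) *
            Ring.inverse (Ideal.Quotient.mk (Ideal.span {g}) (X - C (α i)))) =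
        Ideal.Quotient.mk (Ideal.span {g})
          (∑ i ∈ B, C (e i) * ∏ j ∈ B.erase i, (X - C (α j))) := by
  constructor
  · apply IsCoprime.prod_left
    intro i hi
    apply coprime_X_sub_C_of_eval_ne
    simp only [eval_finset_sum, eval_mul, eval_C, eval_prod, eval_sub, eval_X]
    rw [Finset.sum_eq_single i]
    · refine mul_ne_zero (he i hi) (Finset.prod_ne_zero_iff.2 fun j hj => ?_)
      rw [sub_ne_zero]
      exact fun hEq => (Finset.mem_erase.1 hj).1 (hα (Finset.mem_erase.1 hj).2 hi hEq.symm)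
    · intro j hj hji
      rw [Finset.prod_eq_zero (Finset.mem_erase.2 ⟨(Ne.symm hji), hi⟩) (sub_self (α i)), mul_zero]
    · intro h; exact absurd hi h
  · have hunit : ∀ i ∈ B, IsUnit (Ideal.Quotient.mk (Ideal.span {g}) (X - C (α i))) := by
      intro i hi
      have hc : IsCoprime (X - C (α i)) g := coprime_X_sub_C_of_eval_ne (hgα i hi)
      obtain ⟨u, v, huv⟩ := hc
      refine IsUnit.of_mul_eq_one (Ideal.Quotient.mk _ u) ?_
      have : Ideal.Quotient.mk (Ideal.span {g}) g = 0 := by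
        rw [Ideal.Quotient.eq_zero_iff_mem]; exact Ideal.subset_span rfl
      calc Ideal.Quotient.mk (Ideal.span {g}) (X - C (α i)) * Ideal.Quotient.mk _ u
          = Ideal.Quotient.mk _ (u * (X - C (α i)) + v * g) := by
            rw [map_add, map_mul, map_mul, this, mul_zero, add_zero, mul_comm]
        _ = 1 := by rw [huv, map_one]
    rw [Finset.mul_sum, map_sum]
    refine Finset.sum_congr rfl fun i hi => ?_
    have hσ : (∏ j ∈ B, (X - C (α j))) = (X - C (α i)) * ∏ j ∈ B.erase i, (X - C (α j)) :=
      (Finset.mul_prod_erase B _ hi).symm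
    rw [hσ, map_mul, map_mul]
    have h1 := Ring.mul_inverse_cancel _ (hunit i hi)
    calc _ = Ideal.Quotient.mk (Ideal.span {g}) (C (e i)) *
        ((Ideal.Quotient.mk (Ideal.span {g}) (X - C (α i)) *
          Ring.inverse (Ideal.Quotient.mk (Ideal.span {g}) (X - C (α i)))) *
          Ideal.Quotient.mk (Ideal.span {g}) (∏ j ∈ B.erase i, (X - C (α j)))) := by ring
      _ = _ := by rw [h1, one_mul]
end
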